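/- Let H be a complex Hilbert space and A : H →L[ℂ] H a bounded self-adjoint operator with 0 ≤ re⟪A u, u⟫ for all u ∈ H, and let S t := cfc (fun x : ℝ => if x = 0 then t else Real.sin (t * Real.sqrt x) / Real.sqrt x) A be defined through the continuous functional calculus. Let f : ℝ → H be continuous with compact support. Then: (i) the retarded solution u(t) := ∫_{s ∈ Iic t} (S (t − s)) (f s) ds is twice continuously differentiable and satisfies u″(t) + A (u t) = f t for all t, and u t = 0 whenever t ≤ s for every s in the support of f; (ii) the advanced solution v(t) := −∫_{s ∈ Ici t} (S (t − s)) (f s) ds is twice continuously differentiable and satisfies v″(t) + A (v t) = f t for all t, and v t = 0 whenever t ≥ s for every s in the support of f. -/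

import Mathlib

open scoped InnerProductSpace
open MeasureTheory

namespace AbstractWaveAux

noncomputable def gfun (t : ℝ) : ℝ → ℝ := fun x =>
  if x = 0 then t else Real.sin (t * Real.sqrt x) / Real.sqrt x

noncomputable def cfun (t : ℝ) : ℝ → ℝ := fun x => Real.cos (t * Real.sqrt x)

lemma gfun_zero_right (t : ℝ) : gfun t 0 = t := by simp [gfun]

lemma gfun_of_ne (t : ℝ) {x : ℝ} (hx : x ≠ 0) :
    gfun t x = Real.sin (t * Real.sqrt x) / Real.sqrt x := by simp [gfun, hx]

lemma abs_sin_le_one' (x : ℝ) : |Real.sin x| ≤ 1 :=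
  abs_le.mpr ⟨Real.neg_one_le_sin x, Real.sin_le_one x⟩

lemma abs_cos_le_one' (x : ℝ) : |Real.cos x| ≤ 1 :=
  abs_le.mpr ⟨Real.neg_one_le_cos x, Real.cos_le_one x⟩

lemma abs_sub_le_abs_sub_of_mem_uIcc {t₀ t s : ℝ} (hs : s ∈ Set.uIcc t₀ t) :
    |s - t₀| ≤ |t - t₀| := by
  rcases Set.mem_uIcc.1 hs with ⟨h1, h2⟩ | ⟨h1, h2⟩ <;>
    rcases abs_cases (t - t₀) with ⟨he, hp⟩ | ⟨he, hn⟩ <;>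
    rcases abs_cases (s - t₀) with ⟨he', hp'⟩ | ⟨he', hn'⟩ <;> linarith

/-- generic quadratic Taylor bound -/
lemma taylor_bound {φ φ' φ'' : ℝ → ℝ} {M : ℝ}
    (h1 : ∀ s, HasDerivAt φ (φ' s) s) (h2 : ∀ s, HasDerivAt φ' (φ'' s) s)
    (hb : ∀ s, |φ'' s| ≤ M) (t₀ t : ℝ) :
    |φ t - φ t₀ - (t - t₀) * φ' t₀| ≤ M * (t - t₀) ^ 2 := by
  have hM : 0 ≤ M := le_trans (abs_nonneg _) (hb t₀)
  set K := Set.uIcc t₀ t with hK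
  have hconv : Convex ℝ K := convex_uIcc _ _
  have step1 : ∀ s ∈ K, ‖φ' s - φ' t₀‖ ≤ M * |t - t₀| := by
    intro s hs
    have h := hconv.norm_image_sub_le_of_norm_hasDerivWithin_le
      (f := φ') (f' := φ'') (fun y _ => (h2 y).hasDerivWithinAt)
      (fun y _ => hb y) Set.left_mem_uIcc hs
    refine h.trans ?_
    have h' : |s - t₀| ≤ |t - t₀| := abs_sub_le_abs_sub_of_mem_uIcc hs
    simpa [Real.norm_eq_abs] using mul_le_mul_of_nonneg_left h' hM
  have step2 : ∀ s ∈ K, HasDerivWithinAt (fun y => φ y - φ t₀ - (y - t₀) * φ' t₀)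
      (φ' s - φ' t₀) K s := by
    intro s _
    have hlin : HasDerivAt (fun y : ℝ => (y - t₀) * φ' t₀) (φ' t₀) s := by
      simpa using ((hasDerivAt_id s).sub_const t₀).mul_const (φ' t₀)
    exact (((h1 s).sub_const (φ t₀)).sub hlin).hasDerivWithinAt
  have main := hconv.norm_image_sub_le_of_norm_hasDerivWithin_le step2 step1
    Set.left_mem_uIcc Set.right_mem_uIcc
  simp only [sub_self, zero_mul, sub_zero, Real.norm_eq_abs] at main
  calc |φ t - φ t₀ - (t - t₀) * φ' t₀| ≤ M * |t - t₀| * |t - t₀| := main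
    _ = M * (t - t₀) ^ 2 := by rw [mul_assoc, ← abs_mul, abs_mul_self, sq]

lemma hasDerivAt_sin_mul_div {y : ℝ} (hy : y ≠ 0) (t : ℝ) :
    HasDerivAt (fun t => Real.sin (t * y) / y) (Real.cos (t * y)) t := by
  have h1 : HasDerivAt (fun t : ℝ => t * y) y t := hasDerivAt_mul_const y
  have h2 : HasDerivAt (fun t => Real.sin (t * y)) (Real.cos (t * y) * y) t := by
    have h := (Real.hasDerivAt_sin (t * y)).comp t h1; exact h
  have := h2.div_const y
  simpa [mul_div_assoc, mul_div_cancel_right₀ _ hy] using this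

lemma hasDerivAt_cos_mul (y t : ℝ) :
    HasDerivAt (fun t => Real.cos (t * y)) (-(y * Real.sin (t * y))) t := by
  have h1 : HasDerivAt (fun t : ℝ => t * y) y t := hasDerivAt_mul_const y
  have h2 : HasDerivAt (fun t => Real.cos (t * y)) (-Real.sin (t * y) * y) t := by
    have h := (Real.hasDerivAt_cos (t * y)).comp t h1; exact h
  convert h2 using 1; ring

lemma hasDerivAt_neg_sin_mul {y : ℝ} (t : ℝ) :
    HasDerivAt (fun t => -(y * Real.sin (t * y))) (-(y * (Real.cos (t * y) * y))) t := by
  have h1 : HasDerivAt (fun t : ℝ => t * y) y t := hasDerivAt_mul_const y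
  have h2 : HasDerivAt (fun t => Real.sin (t * y)) (Real.cos (t * y) * y) t := by
    have h := (Real.hasDerivAt_sin (t * y)).comp t h1; exact h
  exact (h2.const_mul y).neg

lemma est1 {x R : ℝ} (hx : 0 ≤ x) (hR : Real.sqrt x ≤ R) (t₀ t : ℝ) :
    |gfun t x - gfun t₀ x - (t - t₀) * cfun t₀ x| ≤ R * (t - t₀) ^ 2 := by
  rcases eq_or_ne x 0 with rfl | hx0
  · have h0 : 0 ≤ R := le_trans (Real.sqrt_nonneg 0) hR
    simp [gfun, cfun]
    positivity
  · have hy : Real.sqrt x ≠ 0 := by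
      simpa [Real.sqrt_eq_zero hx] using hx0
    set y := Real.sqrt x with hy'
    have key := taylor_bound (φ := fun t => Real.sin (t * y) / y)
      (φ' := fun t => Real.cos (t * y)) (φ'' := fun t => -(y * Real.sin (t * y)))
      (M := R) (fun s => hasDerivAt_sin_mul_div hy s)
      (fun s => hasDerivAt_cos_mul y s) ?_ t₀ t
    · simpa [gfun_of_ne _ hx0, cfun, hy'] using key
    · intro s
      have h1 : |Real.sin (s * y)| ≤ 1 := abs_sin_le_one' _
      have hy0 : 0 ≤ y := Real.sqrt_nonneg x
      calc |(-(y * Real.sin (s * y)))| = y * |Real.sin (s * y)| := by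
            rw [abs_neg, abs_mul, abs_of_nonneg hy0]
        _ ≤ y * 1 := by exact mul_le_mul_of_nonneg_left h1 hy0
        _ ≤ R := by simpa using hR

lemma est2 {x R : ℝ} (hx : 0 ≤ x) (hR : Real.sqrt x ≤ R) (t₀ t : ℝ) :
    |cfun t x - cfun t₀ x - (t - t₀) * (-(x * gfun t₀ x))| ≤ R ^ 2 * (t - t₀) ^ 2 := by
  have hy0 : 0 ≤ Real.sqrt x := Real.sqrt_nonneg x
  have hRR : 0 ≤ R := le_trans hy0 hR
  rcases eq_or_ne x 0 with rfl | hx0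
  · simp [gfun, cfun]
    positivity
  · have hy : Real.sqrt x ≠ 0 := by
      simpa [Real.sqrt_eq_zero hx] using hx0
    set y := Real.sqrt x with hy'
    have hyx : y * y = x := Real.mul_self_sqrt hx
    have key := taylor_bound (φ := fun t => Real.cos (t * y))
      (φ' := fun t => -(y * Real.sin (t * y)))
      (φ'' := fun t => -(y * (Real.cos (t * y) * y)))
      (M := R ^ 2) (fun s => hasDerivAt_cos_mul y s)
      (fun s => hasDerivAt_neg_sin_mul s) ?_ t₀ t
    · have hrw : -(y * Real.sin (t₀ * y)) = -(x * gfun t₀ x) := by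
        rw [gfun_of_ne _ hx0, ← hy', ← hyx]
        field_simp
      rw [cfun, cfun, ← hy', ← hrw]
      exact key
    · intro s
      have h1 : |Real.cos (s * y)| ≤ 1 := abs_cos_le_one' _
      calc |(-(y * (Real.cos (s * y) * y)))| = y * |Real.cos (s * y)| * y := by
            rw [abs_neg, abs_mul, abs_mul, abs_of_nonneg hy0]; ring
        _ ≤ y * 1 * y := by
            apply mul_le_mul_of_nonneg_right _ hy0
            exact mul_le_mul_of_nonneg_left h1 hy0
        _ ≤ R * 1 * R := by
            apply mul_le_mul (mul_le_mul_of_nonneg_right hR zero_le_one) hR hy0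
            positivity
        _ = R ^ 2 := by ring

lemma gbound {x : ℝ} (hx : 0 ≤ x) (r : ℝ) : |gfun r x| ≤ |r| := by
  rcases eq_or_ne x 0 with rfl | hx0
  · simp [gfun]
  · have hy : 0 < Real.sqrt x := Real.sqrt_pos.mpr (lt_of_le_of_ne hx (Ne.symm hx0))
    rw [gfun_of_ne _ hx0, abs_div, abs_of_pos hy, div_le_iff₀ hy]
    calc |Real.sin (r * Real.sqrt x)| ≤ |r * Real.sqrt x| := Real.abs_sin_le_abs
      _ = |r| * Real.sqrt x := by rw [abs_mul, abs_of_pos hy]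

lemma cbound (t x : ℝ) : |cfun t x| ≤ 1 := abs_cos_le_one' _

lemma gfun_contOn (t : ℝ) : ContinuousOn (gfun t) (Set.Ici 0) := by
  intro x hx
  rcases eq_or_ne x 0 with rfl | hx0
  · -- continuity at 0 within Ici 0
    have hIci : Set.Ici (0:ℝ) = {0} ∪ Set.Ioi 0 := by
      ext y; simp [le_iff_lt_or_eq, Set.mem_Ioi, or_comm, eq_comm]
    rw [ContinuousWithinAt, hIci, nhdsWithin_union, gfun_zero_right, Filter.tendsto_sup]
    constructor
    · rw [nhdsWithin_singleton]
      simpa [gfun_zero_right] using tendsto_pure_nhds (gfun t) 0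
    · -- within Ioi 0
      rcases eq_or_ne t 0 with rfl | ht0
      · apply Filter.Tendsto.congr' (f₁ := fun _ => (0:ℝ))
        · filter_upwards [self_mem_nhdsWithin] with y hy
          have hy' : (y:ℝ) ≠ 0 := ne_of_gt hy
          simp [gfun_of_ne _ hy']
        · simp
      · have hsin : Filter.Tendsto (fun z : ℝ => Real.sin z / z) (nhdsWithin 0 {(0:ℝ)}ᶜ) (nhds 1) := by
          have h := hasDerivAt_iff_tendsto_slope.mp (Real.hasDerivAt_sin 0)
          simp only [Real.cos_zero] at h
          refine h.congr fun z => ?_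
          simp [slope_def_field]
        have hmap : Filter.Tendsto (fun x : ℝ => t * Real.sqrt x)
            (nhdsWithin 0 (Set.Ioi 0)) (nhdsWithin 0 {(0:ℝ)}ᶜ) := by
          rw [tendsto_nhdsWithin_iff]
          constructor
          · have h1 : Filter.Tendsto Real.sqrt (nhds 0) (nhds 0) := by
              simpa using Real.continuous_sqrt.tendsto 0
            have h2 : Filter.Tendsto (fun k : ℝ => t * Real.sqrt k)
                (nhdsWithin 0 (Set.Ioi 0)) (nhds (t * 0)) :=
              (h1.const_mul t).mono_left nhdsWithin_le_nhds
            simpa using h2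
          · filter_upwards [self_mem_nhdsWithin] with y hy
            have h3 : Real.sqrt y ≠ 0 := ne_of_gt (Real.sqrt_pos.mpr hy)
            simpa using mul_ne_zero ht0 h3
        have hcomp := (hsin.comp hmap).const_mul t
        refine Filter.Tendsto.congr' ?_ (by simpa using hcomp)
        filter_upwards [self_mem_nhdsWithin] with y hy
        have hsy : Real.sqrt y ≠ 0 := ne_of_gt (Real.sqrt_pos.mpr hy)
        rw [gfun_of_ne _ (ne_of_gt hy)]
        field_simp
  · have hxpos : 0 < x := lt_of_le_of_ne hx (Ne.symm hx0)
    have h4 : ContinuousAt (gfun t) x := by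
      have hev : (fun y => Real.sin (t * Real.sqrt y) / Real.sqrt y) =ᶠ[nhds x] gfun t := by
        filter_upwards [eventually_gt_nhds hxpos] with y hy
        exact (gfun_of_ne _ (ne_of_gt hy)).symm
      have hsq : ContinuousAt Real.sqrt x := Real.continuous_sqrt.continuousAt
      have hsqx : Real.sqrt x ≠ 0 := ne_of_gt (Real.sqrt_pos.mpr hxpos)
      have hnum : ContinuousAt (fun y : ℝ => Real.sin (t * Real.sqrt y)) x :=
        Real.continuous_sin.continuousAt.comp (continuousAt_const.mul hsq)
      exact (hnum.div hsq hsqx).congr hev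
    exact h4.continuousWithinAt

section LittleO

open Asymptotics Topology Filter

lemma isLittleO_of_sq_bound {F : Type*} [NormedAddCommGroup F] {φ : ℝ → F} {K t₀ : ℝ}
    (h : ∀ t, ‖φ t‖ ≤ K * (t - t₀) ^ 2) :
    φ =o[nhds t₀] fun t => t - t₀ := by
  have hK : 0 ≤ K := by
    have h1 := (norm_nonneg (φ (t₀ + 1))).trans (h (t₀ + 1))
    simpa using h1
  rw [Asymptotics.isLittleO_iff]
  intro ε hε
  have hev : ∀ᶠ t in nhds t₀, |t - t₀| < ε / (K + 1) := by
    apply eventually_abs_sub_lt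
    positivity
  filter_upwards [hev] with t ht
  have h2 := h t
  have h3 : K * (t - t₀) ^ 2 ≤ ε * |t - t₀| := by
    have h4 : (t - t₀) ^ 2 = |t - t₀| * |t - t₀| := by
      rw [← abs_mul, abs_mul_self, sq]
    rw [h4]
    have h5 : 0 ≤ |t - t₀| := abs_nonneg _
    have h6 : K * |t - t₀| ≤ ε := by
      calc K * |t - t₀| ≤ K * (ε / (K + 1)) := mul_le_mul_of_nonneg_left ht.le hK
        _ ≤ ε := by
            rw [mul_comm, div_mul_eq_mul_div, div_le_iff₀ (by positivity : (0:ℝ) < K + 1)]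
            nlinarith
    calc K * (|t - t₀| * |t - t₀|) = (K * |t - t₀|) * |t - t₀| := by ring
      _ ≤ ε * |t - t₀| := mul_le_mul_of_nonneg_right h6 h5
  calc ‖φ t‖ ≤ K * (t - t₀) ^ 2 := h2
    _ ≤ ε * |t - t₀| := h3
    _ = ε * ‖t - t₀‖ := by rw [Real.norm_eq_abs]

lemma hasDerivAt_of_sq_bound {F : Type*} [NormedAddCommGroup F] [NormedSpace ℝ F]
    {φ : ℝ → F} {L : F} {K t₀ : ℝ}
    (h : ∀ t, ‖φ t - φ t₀ - (t - t₀) • L‖ ≤ K * (t - t₀) ^ 2) : HasDerivAt φ L t₀ := by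
  rw [hasDerivAt_iff_isLittleO]
  exact isLittleO_of_sq_bound h

end LittleO

section Op

open scoped InnerProductSpace

variable {H : Type*} [NormedAddCommGroup H] [InnerProductSpace ℂ H] [CompleteSpace H]
variable {A : H →L[ℂ] H}

lemma spec_nonneg (hA : IsSelfAdjoint A) (hpos : ∀ u : H, 0 ≤ (⟪A u, u⟫_ℂ).re) :
    ∀ x ∈ spectrum ℝ A, 0 ≤ x := by
  have hPos : A.IsPositive := ContinuousLinearMap.isPositive_def'.mpr ⟨hA, fun u => hpos u⟩
  have h0 : (0 : H →L[ℂ] H) ≤ A := (ContinuousLinearMap.nonneg_iff_isPositive A).mpr hPos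
  exact fun x hx => spectrum_nonneg_of_nonneg h0 hx

lemma spec_le : ∀ x ∈ spectrum ℝ A, x ≤ ‖A‖ := by
  intro x hx
  have h1 := spectrum.subset_closedBall_norm_mul (𝕜 := ℝ) A hx
  rw [Metric.mem_closedBall, Real.dist_eq, sub_zero] at h1
  have h2 : ‖(1 : H →L[ℂ] H)‖ ≤ 1 := ContinuousLinearMap.norm_id_le
  have h3 : ‖A‖ * ‖(1 : H →L[ℂ] H)‖ ≤ ‖A‖ * 1 :=
    mul_le_mul_of_nonneg_left h2 (norm_nonneg A)
  calc x ≤ |x| := le_abs_self x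
    _ ≤ ‖A‖ * ‖(1 : H →L[ℂ] H)‖ := h1
    _ ≤ ‖A‖ := by simpa using h3

lemma hgc (hA : IsSelfAdjoint A) (hpos : ∀ u : H, 0 ≤ (⟪A u, u⟫_ℂ).re) (t : ℝ) :
    ContinuousOn (gfun t) (spectrum ℝ A) :=
  (gfun_contOn t).mono fun x hx => spec_nonneg hA hpos x hx

lemma hcc (t : ℝ) : ContinuousOn (cfun t) (spectrum ℝ A) :=
  (Real.continuous_cos.comp (continuous_const.mul Real.continuous_sqrt)).continuousOn

lemma Sop_zero (hA : IsSelfAdjoint A) (hpos : ∀ u : H, 0 ≤ (⟪A u, u⟫_ℂ).re) :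
    cfc (gfun 0) A = 0 := by
  have h : (spectrum ℝ A).EqOn (gfun 0) (fun _ => (0:ℝ)) := by
    intro x _
    rcases eq_or_ne x 0 with rfl | hx0
    · simp [gfun]
    · simp [gfun_of_ne _ hx0]
  rw [cfc_congr h]
  exact cfc_const_zero ℝ A

lemma Cop_zero (hA : IsSelfAdjoint A) : cfc (cfun 0) A = 1 := by
  have h : (spectrum ℝ A).EqOn (cfun 0) (fun _ => (1:ℝ)) := by
    intro x _; simp [cfun]
  rw [cfc_congr h]
  exact cfc_const_one ℝ A

lemma Sop_norm (hA : IsSelfAdjoint A) (hpos : ∀ u : H, 0 ≤ (⟪A u, u⟫_ℂ).re) (r : ℝ) :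
    ‖cfc (gfun r) A‖ ≤ |r| := by
  apply norm_cfc_le (abs_nonneg r)
  intro x hx
  rw [Real.norm_eq_abs]
  exact gbound (spec_nonneg hA hpos x hx) r

lemma Cop_norm (t : ℝ) : ‖cfc (cfun t) A‖ ≤ 1 := by
  apply norm_cfc_le zero_le_one
  intro x _
  rw [Real.norm_eq_abs]
  exact cbound t x

lemma Sop_taylor (hA : IsSelfAdjoint A) (hpos : ∀ u : H, 0 ≤ (⟪A u, u⟫_ℂ).re) (t t₀ : ℝ) :
    ‖cfc (gfun t) A - cfc (gfun t₀) A - (t - t₀) • cfc (cfun t₀) A‖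
      ≤ Real.sqrt ‖A‖ * (t - t₀) ^ 2 := by
  have key : cfc (gfun t) A - cfc (gfun t₀) A - (t - t₀) • cfc (cfun t₀) A
      = cfc (fun x => gfun t x - gfun t₀ x - (t - t₀) * cfun t₀ x) A := by
    have h3 : cfc (fun x => (t - t₀) * cfun t₀ x) A = (t - t₀) • cfc (cfun t₀) A :=
      cfc_const_mul (t - t₀) (cfun t₀) A (hcc t₀)
    have h2 : cfc (fun x => gfun t x - gfun t₀ x) A = cfc (gfun t) A - cfc (gfun t₀) A :=
      cfc_sub (gfun t) (gfun t₀) A (hgc hA hpos t) (hgc hA hpos t₀)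
    have h1 : cfc (fun x => (gfun t x - gfun t₀ x) - (t - t₀) * cfun t₀ x) A
        = cfc (fun x => gfun t x - gfun t₀ x) A - cfc (fun x => (t - t₀) * cfun t₀ x) A :=
      cfc_sub _ _ A ((hgc hA hpos t).sub (hgc hA hpos t₀))
        (continuousOn_const.mul (hcc t₀))
    rw [h1, h2, h3]
  rw [key]
  apply norm_cfc_le (by positivity)
  intro x hx
  rw [Real.norm_eq_abs]
  exact est1 (spec_nonneg hA hpos x hx)
    (Real.sqrt_le_sqrt (spec_le x hx)) t₀ t

lemma Mop_eq (hA : IsSelfAdjoint A) (hpos : ∀ u : H, 0 ≤ (⟪A u, u⟫_ℂ).re) (t₀ : ℝ) :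
    cfc (fun x : ℝ => -(x * gfun t₀ x)) A = -(A ∘L cfc (gfun t₀) A) := by
  have h1 : cfc (fun x : ℝ => -(x * gfun t₀ x)) A = -cfc (fun x : ℝ => x * gfun t₀ x) A :=
    cfc_neg (fun x : ℝ => x * gfun t₀ x) A
  have h2 : cfc (fun x : ℝ => x * gfun t₀ x) A = cfc (id : ℝ → ℝ) A * cfc (gfun t₀) A :=
    cfc_mul _ _ A continuousOn_id (hgc hA hpos t₀)
  rw [h1, h2, cfc_id ℝ A]
  rfl

lemma Cop_taylor (hA : IsSelfAdjoint A) (hpos : ∀ u : H, 0 ≤ (⟪A u, u⟫_ℂ).re) (t t₀ : ℝ) :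
    ‖cfc (cfun t) A - cfc (cfun t₀) A - (t - t₀) • (-(A ∘L cfc (gfun t₀) A))‖
      ≤ ‖A‖ * (t - t₀) ^ 2 := by
  rw [← Mop_eq hA hpos t₀]
  have key : cfc (cfun t) A - cfc (cfun t₀) A - (t - t₀) • cfc (fun x : ℝ => -(x * gfun t₀ x)) A
      = cfc (fun x => cfun t x - cfun t₀ x - (t - t₀) * (-(x * gfun t₀ x))) A := by
    have hm : ContinuousOn (fun x : ℝ => -(x * gfun t₀ x)) (spectrum ℝ A) :=
      (continuousOn_id.mul (hgc hA hpos t₀)).neg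
    have h3 : cfc (fun x : ℝ => (t - t₀) * (-(x * gfun t₀ x))) A
        = (t - t₀) • cfc (fun x : ℝ => -(x * gfun t₀ x)) A :=
      cfc_const_mul (t - t₀) _ A hm
    have h2 : cfc (fun x => cfun t x - cfun t₀ x) A = cfc (cfun t) A - cfc (cfun t₀) A :=
      cfc_sub (cfun t) (cfun t₀) A (hcc t) (hcc t₀)
    have h1 : cfc (fun x => (cfun t x - cfun t₀ x) - (t - t₀) * (-(x * gfun t₀ x))) A
        = cfc (fun x => cfun t x - cfun t₀ x) A
          - cfc (fun x : ℝ => (t - t₀) * (-(x * gfun t₀ x))) A :=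
      cfc_sub _ _ A ((hcc t).sub (hcc t₀)) (continuousOn_const.mul hm)
    rw [h1, h2, h3]
  rw [key]
  apply norm_cfc_le (by positivity)
  intro x hx
  rw [Real.norm_eq_abs]
  have h := est2 (spec_nonneg hA hpos x hx) (Real.sqrt_le_sqrt (spec_le x hx)) t₀ t
  have hsq : Real.sqrt ‖A‖ ^ 2 = ‖A‖ := Real.sq_sqrt (norm_nonneg A)
  rw [hsq] at h
  exact h

end Op

section Core

open MeasureTheory Topology Filter Asymptotics

variable {H : Type*} [NormedAddCommGroup H] [InnerProductSpace ℂ H] [CompleteSpace H]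

set_option maxHeartbeats 1000000 in
set_option synthInstance.maxHeartbeats 1000000 in
lemma core (A : H →L[ℂ] H) (Sop Cop : ℝ → H →L[ℂ] H)
    (hC0 : Cop 0 = 1)
    (hSnorm : ∀ r, ‖Sop r‖ ≤ |r|)
    (hCnorm : ∀ r, ‖Cop r‖ ≤ 1)
    {K1 K2 : ℝ}
    (hq1 : ∀ t t₀, ‖Sop t - Sop t₀ - (t - t₀) • Cop t₀‖ ≤ K1 * (t - t₀) ^ 2)
    (hq2 : ∀ t t₀, ‖Cop t - Cop t₀ - (t - t₀) • (-(A ∘L Sop t₀))‖ ≤ K2 * (t - t₀) ^ 2)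
    (f : ℝ → H) (hf : Continuous f)
    {MF : ℝ} (hMF : ∀ s, ‖f s‖ ≤ MF)
    (a : ℝ) (w : ℝ → H) (hw : ∀ t, w t = ∫ s in a..t, Sop (t - s) (f s)) :
    ContDiff ℝ 2 w ∧ ∀ t, deriv (deriv w) t + A (w t) = f t := by
  have hMF0 : 0 ≤ MF := (norm_nonneg _).trans (hMF 0)
  have hSder : ∀ t₀, HasDerivAt Sop (Cop t₀) t₀ :=
    fun t₀ => hasDerivAt_of_sq_bound (fun t => hq1 t t₀)
  have hCder : ∀ t₀, HasDerivAt Cop (-(A ∘L Sop t₀)) t₀ :=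
    fun t₀ => hasDerivAt_of_sq_bound (fun t => hq2 t t₀)
  have Scont : Continuous Sop := continuous_iff_continuousAt.mpr fun t => (hSder t).continuousAt
  have Ccont : Continuous Cop := continuous_iff_continuousAt.mpr fun t => (hCder t).continuousAt
  have hAScont : Continuous fun r => -(A ∘L Sop r) :=
    (((ContinuousLinearMap.compL ℂ H H H) A).continuous.comp Scont).neg
  have hcS : ∀ t, Continuous fun s => Sop (t - s) (f s) :=
    fun t => ((Scont.comp (continuous_const.sub continuous_id)).clm_apply hf)
  have hcC : ∀ t, Continuous fun s => Cop (t - s) (f s) :=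
    fun t => ((Ccont.comp (continuous_const.sub continuous_id)).clm_apply hf)
  have hcM : ∀ t, Continuous fun s => (-(A ∘L Sop (t - s))) (f s) :=
    fun t => ((hAScont.comp (continuous_const.sub continuous_id)).clm_apply hf)
  set P : ℝ → H := fun t => ∫ s in a..t, Cop (t - s) (f s) with hP
  -- first derivative
  have step1 : ∀ t₀, HasDerivAt w (P t₀) t₀ := by
    intro t₀
    apply hasDerivAt_of_sq_bound (K := K1 * MF * |t₀ - a| + MF)
    intro t
    have hsplit : (∫ s in a..t, Sop (t - s) (f s))
        = (∫ s in a..t₀, Sop (t - s) (f s)) + ∫ s in t₀..t, Sop (t - s) (f s) :=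
      (intervalIntegral.integral_add_adjacent_intervals
        ((hcS t).intervalIntegrable a t₀) ((hcS t).intervalIntegrable t₀ t)).symm
    have hcomb : w t - w t₀ - (t - t₀) • P t₀
        = (∫ s in a..t₀, (Sop (t - s) (f s) - Sop (t₀ - s) (f s)
              - (t - t₀) • Cop (t₀ - s) (f s)))
          + ∫ s in t₀..t, Sop (t - s) (f s) := by
      rw [hw t, hw t₀, hsplit, hP]
      rw [intervalIntegral.integral_sub (f := fun s => Sop (t - s) (f s) - Sop (t₀ - s) (f s))
            (g := fun s => (t - t₀) • Cop (t₀ - s) (f s)) (((hcS t).sub (hcS t₀)).intervalIntegrable a t₀)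
            (((hcC t₀).const_smul (t - t₀)).intervalIntegrable a t₀),
          intervalIntegral.integral_sub ((hcS t).intervalIntegrable a t₀)
            ((hcS t₀).intervalIntegrable a t₀),
          intervalIntegral.integral_smul]
      abel
    rw [hcomb]
    have habs : |t - t₀| * |t - t₀| = (t - t₀) ^ 2 := by
      rw [← abs_mul, abs_mul_self, sq]
    have bound1 : ‖∫ s in a..t₀, (Sop (t - s) (f s) - Sop (t₀ - s) (f s)
          - (t - t₀) • Cop (t₀ - s) (f s))‖ ≤ K1 * (t - t₀) ^ 2 * MF * |t₀ - a| := by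
      apply intervalIntegral.norm_integral_le_of_norm_le_const
      intro s _
      have heq : Sop (t - s) (f s) - Sop (t₀ - s) (f s) - (t - t₀) • Cop (t₀ - s) (f s)
          = (Sop (t - s) - Sop (t₀ - s) - (t - t₀) • Cop (t₀ - s)) (f s) := by
        simp
      rw [heq]
      have hop := hq1 (t - s) (t₀ - s)
      have hrw : t - s - (t₀ - s) = t - t₀ := by ring
      rw [hrw] at hop
      calc ‖(Sop (t - s) - Sop (t₀ - s) - (t - t₀) • Cop (t₀ - s)) (f s)‖
          ≤ ‖Sop (t - s) - Sop (t₀ - s) - (t - t₀) • Cop (t₀ - s)‖ * ‖f s‖ :=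
            ContinuousLinearMap.le_opNorm _ _
        _ ≤ (K1 * (t - t₀) ^ 2) * MF := by
            apply mul_le_mul hop (hMF s) (norm_nonneg _)
            have := (norm_nonneg _).trans hop
            linarith
        _ = K1 * (t - t₀) ^ 2 * MF := by ring
    have bound2 : ‖∫ s in t₀..t, Sop (t - s) (f s)‖ ≤ |t - t₀| * MF * |t - t₀| := by
      apply intervalIntegral.norm_integral_le_of_norm_le_const
      intro s hs
      have hs' : s ∈ Set.uIcc t t₀ := by
        rw [Set.uIcc_comm]
        exact Set.uIoc_subset_uIcc hs
      have h1 : |t - s| ≤ |t - t₀| := by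
        have h2 := abs_sub_le_abs_sub_of_mem_uIcc hs'
        calc |t - s| = |s - t| := abs_sub_comm t s
          _ ≤ |t₀ - t| := h2
          _ = |t - t₀| := abs_sub_comm t₀ t
      calc ‖Sop (t - s) (f s)‖ ≤ ‖Sop (t - s)‖ * ‖f s‖ := ContinuousLinearMap.le_opNorm _ _
        _ ≤ |t - t₀| * MF := by
            apply mul_le_mul ((hSnorm (t - s)).trans h1) (hMF s) (norm_nonneg _) (abs_nonneg _)
    calc ‖(∫ s in a..t₀, (Sop (t - s) (f s) - Sop (t₀ - s) (f s)
              - (t - t₀) • Cop (t₀ - s) (f s)))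
          + ∫ s in t₀..t, Sop (t - s) (f s)‖
        ≤ K1 * (t - t₀) ^ 2 * MF * |t₀ - a| + |t - t₀| * MF * |t - t₀| :=
          (norm_add_le _ _).trans (add_le_add bound1 bound2)
      _ = (K1 * MF * |t₀ - a| + MF) * (t - t₀) ^ 2 := by
          rw [mul_comm (|t - t₀| * MF) (|t - t₀|), ← mul_assoc, habs]; ring
  -- second derivative
  have hPder : ∀ t₀, HasDerivAt P
      (f t₀ + ∫ s in a..t₀, (-(A ∘L Sop (t₀ - s))) (f s)) t₀ := by
    intro t₀
    rw [hasDerivAt_iff_isLittleO]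
    set D : H := f t₀ + ∫ s in a..t₀, (-(A ∘L Sop (t₀ - s))) (f s) with hD
    set T1 : ℝ → H := fun t => ∫ s in a..t₀, (Cop (t - s) (f s) - Cop (t₀ - s) (f s)
        - (t - t₀) • ((-(A ∘L Sop (t₀ - s))) (f s))) with hT1def
    set T2 : ℝ → H := fun t => ∫ s in t₀..t, (Cop (t - s) (f s) - f t₀) with hT2def
    have hdecomp : ∀ t, P t - P t₀ - (t - t₀) • D = T1 t + T2 t := by
      intro t
      have hsplit : (∫ s in a..t, Cop (t - s) (f s))
          = (∫ s in a..t₀, Cop (t - s) (f s)) + ∫ s in t₀..t, Cop (t - s) (f s) :=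
        (intervalIntegral.integral_add_adjacent_intervals
          ((hcC t).intervalIntegrable a t₀) ((hcC t).intervalIntegrable t₀ t)).symm
      have hconst : (t - t₀) • f t₀ = ∫ _ in t₀..t, f t₀ := by
        rw [intervalIntegral.integral_const]
      have hT1 : T1 t = (∫ s in a..t₀, Cop (t - s) (f s)) - (∫ s in a..t₀, Cop (t₀ - s) (f s))
          - (t - t₀) • ∫ s in a..t₀, (-(A ∘L Sop (t₀ - s))) (f s) := by
        simp only [hT1def]
        rw [intervalIntegral.integral_sub (f := fun s => Cop (t - s) (f s) - Cop (t₀ - s) (f s))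
              (g := fun s => (t - t₀) • ((-(A ∘L Sop (t₀ - s))) (f s))) (((hcC t).sub (hcC t₀)).intervalIntegrable a t₀)
              (((hcM t₀).const_smul (t - t₀)).intervalIntegrable a t₀),
            intervalIntegral.integral_sub ((hcC t).intervalIntegrable a t₀)
              ((hcC t₀).intervalIntegrable a t₀),
            intervalIntegral.integral_smul]
      have hT2 : T2 t = (∫ s in t₀..t, Cop (t - s) (f s)) - (t - t₀) • f t₀ := by
        simp only [hT2def]
        rw [intervalIntegral.integral_sub ((hcC t).intervalIntegrable t₀ t)
              (intervalIntegrable_const), ← hconst]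
      rw [hT1, hT2]
      simp only [hP, hD]
      rw [hsplit, smul_add]
      abel
    have hT1o : T1 =o[nhds t₀] fun t => t - t₀ := by
      apply isLittleO_of_sq_bound (K := K2 * MF * |t₀ - a|)
      intro t
      have bound1 : ‖T1 t‖ ≤ K2 * (t - t₀) ^ 2 * MF * |t₀ - a| := by
        apply intervalIntegral.norm_integral_le_of_norm_le_const
        intro s _
        have heq : Cop (t - s) (f s) - Cop (t₀ - s) (f s)
              - (t - t₀) • ((-(A ∘L Sop (t₀ - s))) (f s))
            = (Cop (t - s) - Cop (t₀ - s) - (t - t₀) • (-(A ∘L Sop (t₀ - s)))) (f s) := by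
          simp
        rw [heq]
        have hop := hq2 (t - s) (t₀ - s)
        have hrw : t - s - (t₀ - s) = t - t₀ := by ring
        rw [hrw] at hop
        calc ‖(Cop (t - s) - Cop (t₀ - s) - (t - t₀) • (-(A ∘L Sop (t₀ - s)))) (f s)‖
            ≤ ‖Cop (t - s) - Cop (t₀ - s) - (t - t₀) • (-(A ∘L Sop (t₀ - s)))‖ * ‖f s‖ :=
              ContinuousLinearMap.le_opNorm _ _
          _ ≤ (K2 * (t - t₀) ^ 2) * MF := by
              apply mul_le_mul hop (hMF s) (norm_nonneg _)
              have := (norm_nonneg _).trans hop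
              linarith
          _ = K2 * (t - t₀) ^ 2 * MF := by ring
      calc ‖T1 t‖ ≤ K2 * (t - t₀) ^ 2 * MF * |t₀ - a| := bound1
        _ = K2 * MF * |t₀ - a| * (t - t₀) ^ 2 := by ring
    have hT2o : T2 =o[nhds t₀] fun t => t - t₀ := by
      rw [isLittleO_iff]
      intro ε hε
      have hf0 : Filter.Tendsto (fun s => f s - f t₀) (nhds t₀) (nhds 0) := by
        have := (hf.tendsto t₀).sub (tendsto_const_nhds (x := f t₀))
        simpa using this
      have ev1 : ∀ᶠ s in nhds t₀, ‖f s - f t₀‖ < ε / 2 := by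
        have := Metric.tendsto_nhds.mp hf0 (ε / 2) (by positivity)
        filter_upwards [this] with s hs
        simpa [dist_eq_norm] using hs
      have hCten : Filter.Tendsto (fun r => Cop r (f t₀)) (nhds 0) (nhds (f t₀)) := by
        have hc : Continuous fun r => Cop r (f t₀) := Ccont.clm_apply continuous_const
        have := hc.tendsto 0
        rwa [hC0, ContinuousLinearMap.one_apply] at this
      have ev2 : ∀ᶠ r in nhds (0:ℝ), ‖Cop r (f t₀) - f t₀‖ < ε / 2 := by
        have := Metric.tendsto_nhds.mp hCten (ε / 2) (by positivity)
        filter_upwards [this] with r hr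
        simpa [dist_eq_norm] using hr
      obtain ⟨δ₁, hδ₁, hb1⟩ := Metric.eventually_nhds_iff.mp ev1
      obtain ⟨δ₂, hδ₂, hb2⟩ := Metric.eventually_nhds_iff.mp ev2
      have hδ : 0 < min δ₁ δ₂ := lt_min hδ₁ hδ₂
      filter_upwards [eventually_abs_sub_lt t₀ hδ] with t ht
      have key : ‖T2 t‖ ≤ ε * |t - t₀| := by
        apply intervalIntegral.norm_integral_le_of_norm_le_const
        intro s hs
        have hs' : s ∈ Set.uIcc t t₀ := by
          rw [Set.uIcc_comm]
          exact Set.uIoc_subset_uIcc hs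
        have h1 : |t - s| ≤ |t - t₀| := by
          have h2 := abs_sub_le_abs_sub_of_mem_uIcc hs'
          calc |t - s| = |s - t| := abs_sub_comm t s
            _ ≤ |t₀ - t| := h2
            _ = |t - t₀| := abs_sub_comm t₀ t
        have h3 : |s - t₀| ≤ |t - t₀| := by
          rw [Set.uIcc_comm] at hs'
          exact abs_sub_le_abs_sub_of_mem_uIcc hs'
        have hsδ₁ : dist s t₀ < δ₁ :=
          lt_of_le_of_lt (by rw [Real.dist_eq]; exact h3)
            (lt_of_lt_of_le ht (min_le_left _ _))
        have htsδ₂ : dist (t - s) 0 < δ₂ := by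
          rw [Real.dist_eq, sub_zero]
          exact lt_of_le_of_lt h1 (lt_of_lt_of_le ht (min_le_right _ _))
        have hdec : Cop (t - s) (f s) - f t₀
            = Cop (t - s) (f s - f t₀) + (Cop (t - s) (f t₀) - f t₀) := by
          rw [map_sub]; abel
        rw [hdec]
        calc ‖Cop (t - s) (f s - f t₀) + (Cop (t - s) (f t₀) - f t₀)‖
            ≤ ‖Cop (t - s) (f s - f t₀)‖ + ‖Cop (t - s) (f t₀) - f t₀‖ := norm_add_le _ _
          _ ≤ 1 * (ε / 2) + ε / 2 := by
              apply add_le_add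
              · calc ‖Cop (t - s) (f s - f t₀)‖
                    ≤ ‖Cop (t - s)‖ * ‖f s - f t₀‖ := ContinuousLinearMap.le_opNorm _ _
                  _ ≤ 1 * (ε / 2) := by
                      apply mul_le_mul (hCnorm _) (hb1 hsδ₁).le (norm_nonneg _) zero_le_one
              · exact (hb2 htsδ₂).le
          _ = ε := by ring
      calc ‖T2 t‖ ≤ ε * |t - t₀| := key
        _ = ε * ‖t - t₀‖ := by rw [Real.norm_eq_abs]
    have := hT1o.add hT2o
    exact this.congr' (Filter.EventuallyEq.of_eq (funext fun t => (hdecomp t).symm))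
      (Filter.EventuallyEq.refl _ _)
  -- rewrite the derivative of P
  have Dint : ∀ t₀ : ℝ, (∫ s in a..t₀, (-(A ∘L Sop (t₀ - s))) (f s)) = -(A (w t₀)) := by
    intro t₀
    have h1 : ∀ s : ℝ, (-(A ∘L Sop (t₀ - s))) (f s) = -(A (Sop (t₀ - s) (f s))) := by
      intro s; simp
    rw [intervalIntegral.integral_congr (g := fun s => -(A (Sop (t₀ - s) (f s))))
        (fun s _ => h1 s)]
    rw [intervalIntegral.integral_neg,
      ContinuousLinearMap.intervalIntegral_comp_comm A ((hcS t₀).intervalIntegrable a t₀),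
      ← hw t₀]
  have derivP : ∀ t₀, HasDerivAt P (f t₀ - A (w t₀)) t₀ := by
    intro t₀
    have := hPder t₀
    rwa [Dint t₀, ← sub_eq_add_neg] at this
  have hderivw : deriv w = P := funext fun t => (step1 t).deriv
  constructor
  · have hwd : Differentiable ℝ w := fun t => (step1 t).differentiableAt
    have hPd : Differentiable ℝ P := fun t => (derivP t).differentiableAt
    have hdP : deriv P = fun t => f t - A (w t) := funext fun t => (derivP t).deriv
    have hcont : Continuous fun t => f t - A (w t) :=
      hf.sub (A.continuous.comp hwd.continuous)
    rw [show (2 : WithTop ℕ∞) = 1 + 1 by norm_num, contDiff_succ_iff_deriv]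
    refine ⟨hwd, by simp, ?_⟩
    rw [hderivw, contDiff_one_iff_deriv]
    exact ⟨hPd, hdP ▸ hcont⟩
  · intro t
    rw [hderivw, (derivP t).deriv]
    abel

end Core

section Conv

open MeasureTheory

variable {H : Type*} [NormedAddCommGroup H] [NormedSpace ℝ H] [CompleteSpace H]

lemma iic_conv (q : ℝ → H) (hq : Continuous q) (hqc : HasCompactSupport q)
    (a t : ℝ) (ha : ∀ s ≤ a, q s = 0) :
    ∫ s in Set.Iic t, q s = ∫ s in a..t, q s := by
  have hint : MeasureTheory.Integrable q := hq.integrable_of_hasCompactSupport hqc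
  rcases le_or_gt a t with h | h
  · have hsplit : Set.Iic t = Set.Iic a ∪ Set.Ioc a t := (Set.Iic_union_Ioc_eq_Iic h).symm
    have z1 : (∫ s in Set.Iic a, q s) = 0 :=
      MeasureTheory.setIntegral_eq_zero_of_forall_eq_zero (fun s hs => ha s hs)
    rw [hsplit, MeasureTheory.setIntegral_union (Set.Iic_disjoint_Ioc le_rfl) measurableSet_Ioc
      hint.integrableOn hint.integrableOn, z1, zero_add, intervalIntegral.integral_of_le h]
  · have z1 : (∫ s in Set.Iic t, q s) = 0 :=
      MeasureTheory.setIntegral_eq_zero_of_forall_eq_zero (fun s hs => ha s (le_trans hs h.le))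
    have z2 : (∫ s in Set.Ioc t a, q s) = 0 :=
      MeasureTheory.setIntegral_eq_zero_of_forall_eq_zero (fun s hs => ha s hs.2)
    rw [z1, intervalIntegral.integral_symm, intervalIntegral.integral_of_le h.le, z2, neg_zero]

lemma ici_conv (q : ℝ → H) (hq : Continuous q) (hqc : HasCompactSupport q)
    (b t : ℝ) (hb : ∀ s, b ≤ s → q s = 0) :
    ∫ s in Set.Ici t, q s = ∫ s in t..b, q s := by
  have hint : MeasureTheory.Integrable q := hq.integrable_of_hasCompactSupport hqc
  rcases le_or_gt t b with h | h
  · rw [MeasureTheory.integral_Ici_eq_integral_Ioi]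
    have hsplit : Set.Ioi t = Set.Ioc t b ∪ Set.Ioi b := (Set.Ioc_union_Ioi_eq_Ioi h).symm
    have z1 : (∫ s in Set.Ioi b, q s) = 0 :=
      MeasureTheory.setIntegral_eq_zero_of_forall_eq_zero (fun s hs => hb s hs.le)
    rw [hsplit, MeasureTheory.setIntegral_union (Set.Ioc_disjoint_Ioi le_rfl) measurableSet_Ioi
      hint.integrableOn hint.integrableOn, z1, add_zero, intervalIntegral.integral_of_le h]
  · have z1 : (∫ s in Set.Ici t, q s) = 0 :=
      MeasureTheory.setIntegral_eq_zero_of_forall_eq_zero (fun s hs => hb s (le_trans h.le hs))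
    have z2 : (∫ s in Set.Ioc b t, q s) = 0 :=
      MeasureTheory.setIntegral_eq_zero_of_forall_eq_zero (fun s hs => hb s hs.1.le)
    rw [z1, intervalIntegral.integral_symm, intervalIntegral.integral_of_le h.le, z2, neg_zero]

end Conv

end AbstractWaveAux

open AbstractWaveAux

set_option maxHeartbeats 1000000 in
set_option synthInstance.maxHeartbeats 1000000 in
/-- Duhamel construction of the retarded and advanced fundamental solutions for the
abstract wave equation `u″ + A u = f` with positive bounded self-adjoint `A`:
the retarded solution `u(t) = ∫_{s ≤ t} S(t−s) f(s) ds` and the advanced solution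
`v(t) = −∫_{s ≥ t} S(t−s) f(s) ds` are `C²`, solve the inhomogeneous equation, and
vanish respectively in the past and in the future of the support of `f`. -/
theorem abstract_wave_retarded_advanced {H : Type*} [NormedAddCommGroup H]
    [InnerProductSpace ℂ H] [CompleteSpace H]
    (A : H →L[ℂ] H) (hA : IsSelfAdjoint A) (hpos : ∀ u : H, 0 ≤ (⟪A u, u⟫_ℂ).re)
    (S : ℝ → H →L[ℂ] H)
    (hS : ∀ t : ℝ, S t = cfc (fun x : ℝ =>
      if x = 0 then t else Real.sin (t * Real.sqrt x) / Real.sqrt x) A)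
    (f : ℝ → H) (hf : Continuous f) (hfc : HasCompactSupport f)
    (u v : ℝ → H)
    (hu : ∀ t : ℝ, u t = ∫ s in Set.Iic t, (S (t - s)) (f s))
    (hv : ∀ t : ℝ, v t = -∫ s in Set.Ici t, (S (t - s)) (f s)) :
    (ContDiff ℝ 2 u ∧ (∀ t : ℝ, deriv (deriv u) t + A (u t) = f t) ∧
      (∀ t : ℝ, (∀ s ∈ tsupport f, t ≤ s) → u t = 0)) ∧
    (ContDiff ℝ 2 v ∧ (∀ t : ℝ, deriv (deriv v) t + A (v t) = f t) ∧
      (∀ t : ℝ, (∀ s ∈ tsupport f, s ≤ t) → v t = 0)) := by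
  -- identify S with the cfc family
  have hSeq : ∀ t, S t = cfc (gfun t) A := hS
  set Cop : ℝ → H →L[ℂ] H := fun t => cfc (cfun t) A with hCop
  have hS0 : S 0 = 0 := by rw [hSeq 0]; exact Sop_zero hA hpos
  have hC0 : Cop 0 = 1 := Cop_zero hA
  have hSnorm : ∀ r, ‖S r‖ ≤ |r| := fun r => by rw [hSeq r]; exact Sop_norm hA hpos r
  have hCnorm : ∀ r, ‖Cop r‖ ≤ 1 := fun r => Cop_norm r
  have hq1 : ∀ t t₀, ‖S t - S t₀ - (t - t₀) • Cop t₀‖ ≤ Real.sqrt ‖A‖ * (t - t₀) ^ 2 := by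
    intro t t₀
    rw [hSeq t, hSeq t₀]
    exact Sop_taylor hA hpos t t₀
  have hq2 : ∀ t t₀, ‖Cop t - Cop t₀ - (t - t₀) • (-(A ∘L S t₀))‖ ≤ ‖A‖ * (t - t₀) ^ 2 := by
    intro t t₀
    rw [hSeq t₀]
    exact Cop_taylor hA hpos t t₀
  have Scont : Continuous S := continuous_iff_continuousAt.mpr fun t =>
    (hasDerivAt_of_sq_bound (fun s => hq1 s t)).continuousAt
  obtain ⟨MF, hMF⟩ := hfc.exists_bound_of_continuous hf
  -- bounds for the support
  obtain ⟨r, hr⟩ := hfc.isBounded.subset_closedBall 0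
  set a : ℝ := -|r| - 1 with ha_def
  set b : ℝ := |r| + 1 with hb_def
  have hfa : ∀ s ≤ a, f s = 0 := by
    intro s hs
    apply image_eq_zero_of_notMem_tsupport
    intro hmem
    have h1 := hr hmem
    rw [Metric.mem_closedBall, Real.dist_eq, sub_zero] at h1
    have h2 : -|s| ≤ s := neg_abs_le s
    have h3 : r ≤ |r| := le_abs_self r
    rw [ha_def] at hs
    linarith
  have hfb : ∀ s, b ≤ s → f s = 0 := by
    intro s hs
    apply image_eq_zero_of_notMem_tsupport
    intro hmem
    have h1 := hr hmem
    rw [Metric.mem_closedBall, Real.dist_eq, sub_zero] at h1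
    have h2 : s ≤ |s| := le_abs_self s
    have h3 : r ≤ |r| := le_abs_self r
    rw [hb_def] at hs
    linarith
  -- integrand facts
  have hcS : ∀ t : ℝ, Continuous fun s => S (t - s) (f s) :=
    fun t => (Scont.comp (continuous_const.sub continuous_id)).clm_apply hf
  have hsupp : ∀ t : ℝ, HasCompactSupport fun s => S (t - s) (f s) := by
    intro t
    apply hfc.mono
    intro s hs
    rw [Function.mem_support] at hs ⊢
    intro h0
    exact hs (by rw [h0, map_zero])
  -- interval-integral representations
  have hu' : ∀ t, u t = ∫ s in a..t, S (t - s) (f s) := by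
    intro t
    rw [hu t]
    exact iic_conv _ (hcS t) (hsupp t) a t (fun s hs => by rw [hfa s hs, map_zero])
  have hv' : ∀ t, v t = ∫ s in b..t, S (t - s) (f s) := by
    intro t
    rw [hv t, ici_conv _ (hcS t) (hsupp t) b t
      (fun s hs => by rw [hfb s hs, map_zero])]
    rw [intervalIntegral.integral_symm, neg_neg]
  -- apply the core lemma
  obtain ⟨hu_cd, hu_eq⟩ := core A S Cop hC0 hSnorm hCnorm hq1 hq2 f hf hMF a u hu'
  obtain ⟨hv_cd, hv_eq⟩ := core A S Cop hC0 hSnorm hCnorm hq1 hq2 f hf hMF b v hv'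
  refine ⟨⟨hu_cd, hu_eq, ?_⟩, ⟨hv_cd, hv_eq, ?_⟩⟩
  · intro t htt
    rw [hu t]
    apply MeasureTheory.setIntegral_eq_zero_of_forall_eq_zero
    intro s hs
    rcases eq_or_ne (f s) 0 with h0 | h0
    · rw [h0, map_zero]
    · have hsup : s ∈ tsupport f := subset_tsupport f (Function.mem_support.mpr h0)
      have h2 : s = t := le_antisymm hs (htt s hsup)
      rw [h2, sub_self, hS0, ContinuousLinearMap.zero_apply]
  · intro t htt
    rw [hv t, neg_eq_zero]
    apply MeasureTheory.setIntegral_eq_zero_of_forall_eq_zero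
    intro s hs
    rcases eq_or_ne (f s) 0 with h0 | h0
    · rw [h0, map_zero]
    · have hsup : s ∈ tsupport f := subset_tsupport f (Function.mem_support.mpr h0)
      have h2 : s = t := le_antisymm (htt s hsup) hs
      rw [h2, sub_self, hS0, ContinuousLinearMap.zero_apply]
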